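/- Let n = 3k with k ≥ 2. The vertex x of GT(k·ϖ₃, (1,…,1)) constructed from the sequences T1, T2 has denominator 2^N where N = k + ⌊k/2⌋ - 2; consequently the graded semigroup of integral Gelfand–Tsetlin patterns lying in GT(N'λ, N'μ) for some N' ≥ 0 has an essential generator of degree 2^N > 2^(n/2 - 3). -/

import Mathlib

open Finset

/-- Membership in the `M`-th dilate `GT(Mλ, Mμ)` of the Gelfand–Tsetlin polytope for
`λ = (k,k,k,0,…,0) ∈ ℚ^n`, `μ = (1,…,1)`: a triangular array (1-indexed) with the
interlacing inequalities, top row `Mλ`, and row sums `Σ_{i=1}^j y i j = M·j`. -/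
def memGTdilate (n k M : ℕ) (y : ℕ → ℕ → ℚ) : Prop :=
  (∀ i j : ℕ, 1 ≤ i → i ≤ j → j ≤ n - 1 →
      y i (j + 1) ≥ y i j ∧ y i j ≥ y (i + 1) (j + 1)) ∧
  (∀ i : ℕ, 1 ≤ i → i ≤ n → y i n = if i ≤ 3 then (M * k : ℚ) else 0) ∧
  (∀ j : ℕ, 1 ≤ j → j ≤ n → ∑ i ∈ Finset.Icc 1 j, y i j = M * j)


/-- key divisibility: 9 ∣ 5(-1)^j - (6j+5)2^j, quotient odd for j ≥ 1. -/
lemma gtAux_key (j : ℕ) : ∃ m : ℤ, 9 * m = 5*(-1:ℤ)^j - (6*j+5)*2^j ∧ (1 ≤ j → Odd m) := by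
  induction j with
  | zero => exact ⟨0, by norm_num, by omega⟩
  | succ j ih =>
    obtain ⟨m, hm, hodd⟩ := ih
    refine ⟨-m - (2*j+3)*2^j, by push_cast [pow_succ]; ring_nf; ring_nf at hm; linarith, ?_⟩
    intro _
    rcases Nat.eq_zero_or_pos j with h0 | h1
    · subst h0; norm_num at hm ⊢
      refine ⟨-m - 2, by linarith⟩
    · obtain ⟨c, hc⟩ := hodd h1
      obtain ⟨j', rfl⟩ : ∃ j', j = j' + 1 := ⟨j - 1, by omega⟩
      refine ⟨-c - 1 - (2*(j'+1)+3)*2^j', ?_⟩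
      rw [hc]; push_cast [pow_succ]; ring

lemma gtAux_T1form (k j : ℕ) :
    ∃ m : ℤ, ((k : ℚ) - (2/3) * j + (5/9) * (-1/2 : ℚ) ^ j - 5/9) = k + m / 2^j ∧
      (1 ≤ j → Odd m) := by
  obtain ⟨m, hm, hodd⟩ := gtAux_key j
  refine ⟨m, ?_, hodd⟩
  have h2 : (2:ℚ)^j ≠ 0 := by positivity
  have hmQ : (9:ℚ) * m = 5*(-1:ℚ)^j - (6*j+5)*2^j := by exact_mod_cast hm
  have hdp : ((-1:ℚ)/2)^j = (-1:ℚ)^j / 2^j := div_pow _ _ _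
  rw [show (-1/2 : ℚ) = (-1:ℚ)/2 by norm_num, hdp]
  field_simp
  linear_combination (-3:ℚ) * hmQ

lemma gtAux_T2form (k j : ℕ) :
    ∃ m : ℤ, ((k : ℚ) - (2/3) * j - (5/18) * (-1/2 : ℚ) ^ j - 2/9) = k + m / 2^(j+1) := by
  obtain ⟨m, hm, -⟩ := gtAux_key j
  refine ⟨-m - (2*j+1)*2^j, ?_⟩
  have h2 : (2:ℚ)^j ≠ 0 := by positivity
  have hmQ : (9:ℚ) * m = 5*(-1:ℚ)^j - (6*j+5)*2^j := by exact_mod_cast hm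
  have hdp : ((-1:ℚ)/2)^j = (-1:ℚ)^j / 2^j := div_pow _ _ _
  rw [show (-1/2 : ℚ) = (-1:ℚ)/2 by norm_num, hdp]
  push_cast [pow_succ]
  field_simp
  linear_combination (54:ℚ) * hmQ

/-- 2^N * (k + m/2^j) is an integer when j ≤ N -/
lemma gtAux_int (k N j : ℕ) (m : ℤ) (hj : j ≤ N) (v : ℚ)
    (hv : v = (k:ℚ) + m / 2^j) : ∃ z : ℤ, (2^N : ℚ) * v = z := by
  refine ⟨2^N * k + 2^(N-j) * m, ?_⟩
  have hN : N = (N - j) + j := by omega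
  have h2 : (2:ℚ)^j ≠ 0 := by positivity
  rw [hv, hN]
  simp only [Nat.add_sub_cancel]
  push_cast [pow_add]
  field_simp

/-- if d * (k + m/2^N) ∈ ℤ with m odd then 2^N ∣ d -/
lemma gtAux_dvd (k N : ℕ) (d : ℕ) (m : ℤ) (hm : Odd m)
    (h : ∃ z : ℤ, (d : ℚ) * ((k:ℚ) + m / 2^N) = z) : 2^N ∣ d := by
  obtain ⟨z, hz⟩ := h
  have h2 : (2:ℚ)^N ≠ 0 := by positivity
  have hint : (d:ℤ) * m = 2^N * (z - d * k) := by
    have : (d:ℚ) * m = 2^N * (z - d * k) := by field_simp at hz; linarith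
    exact_mod_cast this
  have hdvd : ((2:ℤ)^N) ∣ (d:ℤ) * m := ⟨z - d*k, hint⟩
  have hnat : (2^N : ℕ) ∣ d * m.natAbs := by
    have := Int.natAbs_dvd_natAbs.mpr hdvd
    simpa [Int.natAbs_mul, Int.natAbs_pow] using this
  have hcop : Nat.Coprime (2^N) m.natAbs :=
    Nat.Coprime.pow_left _ (Nat.coprime_two_left.mpr (Int.natAbs_odd.mpr hm))
  exact (Nat.Coprime.dvd_of_dvd_mul_right hcop hnat)

section GT
variable {n k M : ℕ} {y : ℕ → ℕ → ℚ}

lemma gtAux_mono (h : memGTdilate n k M y) {i j j' : ℕ} (hi : 1 ≤ i) (hij : i ≤ j)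
    (hjj : j ≤ j') (hj'n : j' ≤ n) : y i j ≤ y i j' := by
  induction j' with
  | zero => omega
  | succ j' ih =>
    rcases Nat.eq_or_lt_of_le hjj with rfl | hlt
    · exact le_refl _
    · have h1 : y i j ≤ y i j' := ih (by omega) (by omega)
      have h2 := (h.1 i j' hi (by omega) (by omega)).1
      linarith
lemma gtAux_down (h : memGTdilate n k M y) {i j d : ℕ} (hi : 1 ≤ i) (hij : i ≤ j)
    (hd : j + d ≤ n) : y (i + d) (j + d) ≤ y i j := by
  induction d with
  | zero => simp
  | succ d ih =>
    have h1 : y (i + d) (j + d) ≤ y i j := ih (by omega)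
    have h2 := (h.1 (i+d) (j+d) (by omega) (by omega) (by omega)).2
    have e1 : i + (d+1) = (i + d) + 1 := by omega
    have e2 : j + (d+1) = (j + d) + 1 := by omega
    rw [e1, e2]; linarith

/-- entries with row index ≥ 4 vanish -/
lemma gtAux_zero (h : memGTdilate n k M y) {i j : ℕ} (hi : 4 ≤ i) (hij : i ≤ j)
    (hjn : j ≤ n) : y i j = 0 := by
  have hup : y i j ≤ y i n := gtAux_mono h (by omega) hij hjn le_rfl
  have hn : y i n = 0 := by
    rw [h.2.1 i (by omega) (by omega)]; simp; omega
  have hdn : y (i + (n - j)) (j + (n - j)) ≤ y i j := gtAux_down h (by omega) hij (by omega)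
  have e : j + (n - j) = n := by omega
  rw [e] at hdn
  have hbot : y (i + (n - j)) n = 0 := by
    rw [h.2.1 _ (by omega) (by omega)]; simp; omega
  linarith [hdn, hup, hbot.symm ▸ hdn]

/-- row sums for rows ≥ 3 reduce to the first three entries -/
lemma gtAux_rowsum (h : memGTdilate n k M y) {j : ℕ} (h3 : 3 ≤ j) (hjn : j ≤ n) :
    y 1 j + y 2 j + y 3 j = M * j := by
  have hs := h.2.2 j (by omega) hjn
  have hsplit : Finset.Icc 1 j = insert 1 (insert 2 (insert 3 (Finset.Icc 4 j))) := by
    ext a; simp [Finset.mem_Icc, Finset.mem_insert]; omega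
  rw [hsplit] at hs
  rw [Finset.sum_insert (by simp [Finset.mem_Icc]; try omega),
      Finset.sum_insert (by simp [Finset.mem_Icc]; try omega),
      Finset.sum_insert (by simp [Finset.mem_Icc]; try omega)] at hs
  have hz : ∑ i ∈ Finset.Icc 4 j, y i j = 0 := by
    apply Finset.sum_eq_zero
    intro a ha
    simp [Finset.mem_Icc] at ha
    exact gtAux_zero h (by omega) (by omega) hjn
  rw [hz] at hs; linarith

end GT

set_option maxHeartbeats 3200000 in
/-- The vertex `x` of `GT(k·ϖ₃, (1,…,1))` built from `T1`, `T2` has denominator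
exactly `2^N` where `N = k + ⌊k/2⌋ - 2`; consequently the integral point `2^N · x`
is an essential generator of degree `2^N` of the graded semigroup of integral
GT patterns (it is not a sum of two nonzero elements), and `2^N > 2^(n/2 - 3)`. -/
theorem gt_pattern_denominator_and_essential (k n N : ℕ) (hk : 2 ≤ k) (hn : n = 3 * k)
    (hN : N = k + k / 2 - 2)
    (T1 T2 : ℕ → ℚ)
    (hT1 : ∀ i : ℕ, T1 i = (k : ℚ) - (2/3) * i + (5/9) * (-1/2 : ℚ) ^ i - 5/9)
    (hT2 : ∀ i : ℕ, T2 i = (k : ℚ) - (2/3) * i - (5/18) * (-1/2 : ℚ) ^ i - 2/9)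
    (x : ℕ → ℕ → ℚ)
    (hxGT : memGTdilate n k 1 x)
    (htop : x 1 n = k ∧ x 2 n = k ∧ x 3 n = k)
    (hrow1 : x 1 (n - 1) = k ∧ x 2 (n - 1) = k ∧ x 3 (n - 1) = k - 1)
    (hrow2 : x 1 (n - 2) = k ∧ x 2 (n - 2) = k - 1/2)
    (hrow3 : x 1 (n - 3) = k)
    (hblock : ∀ j : ℕ, 1 ≤ j → j ≤ N - 1 →
      x 3 (n - 2*j) = T1 j ∧
      x 2 (n - 2*j - 1) = T1 j ∧ x 3 (n - 2*j - 1) = T1 j ∧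
      x 1 (n - 2*j - 2) = T2 j ∧ x 2 (n - 2*j - 2) = T1 j ∧
      x 1 (n - 2*j - 3) = T1 j)
    (heven : Even k →
      x 3 4 = T1 N ∧ x 2 3 = T1 N ∧ x 3 3 = T1 N ∧
      x 1 2 = 2 - T1 N ∧ x 2 2 = T1 N ∧ x 1 1 = 1)
    (hodd : Odd k →
      x 3 5 = T1 N ∧ x 2 4 = T1 N ∧ x 3 4 = T1 N ∧
      x 1 3 = T1 N ∧ x 2 3 = T1 N ∧ x 3 3 = 3 - 2 * T1 N ∧
      x 1 2 = T1 N ∧ x 2 2 = 2 - T1 N ∧ x 1 1 = 1)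
    (hzero : ∀ i j : ℕ, 4 ≤ i → i ≤ j → j ≤ n → x i j = 0) :
    IsLeast {d : ℕ | 0 < d ∧ ∀ i j : ℕ, 1 ≤ i → i ≤ j → j ≤ n →
        ∃ z : ℤ, (d : ℚ) * x i j = z} (2 ^ N) ∧
    (¬ ∃ (M₁ M₂ : ℕ) (y₁ y₂ : ℕ → ℕ → ℚ),
        0 < M₁ ∧ 0 < M₂ ∧ M₁ + M₂ = 2 ^ N ∧
        memGTdilate n k M₁ y₁ ∧ memGTdilate n k M₂ y₂ ∧
        (∀ i j : ℕ, 1 ≤ i → i ≤ j → j ≤ n →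
          (∃ z : ℤ, y₁ i j = z) ∧ (∃ z : ℤ, y₂ i j = z)) ∧
        (∀ i j : ℕ, 1 ≤ i → i ≤ j → j ≤ n →
          y₁ i j + y₂ i j = (2 ^ N : ℚ) * x i j)) ∧
    ((2 : ℝ) ^ (N : ℕ) > (2 : ℝ) ^ ((n : ℝ) / 2 - 3)) := by
  have hN1 : 1 ≤ N := by omega
  have hn6 : 6 ≤ n := by omega
  -- the key decomposition of T1 N
  obtain ⟨mN, hmN, hmNodd⟩ := gtAux_T1form k N
  have hT1N : T1 N = (k:ℚ) + mN / 2^N := (hT1 N).trans hmN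
  have hmNodd' : Odd mN := hmNodd hN1
  -- x 2 2 or x 1 2 has denominator 2^N; extract the divisibility consequence
  have hdenom : ∀ d : ℕ, (∀ i j : ℕ, 1 ≤ i → i ≤ j → j ≤ n →
      ∃ z : ℤ, (d : ℚ) * x i j = z) → 2^N ∣ d := by
    intro d hd
    rcases Nat.even_or_odd k with hke | hko
    · have hx22 : x 2 2 = T1 N := (heven hke).2.2.2.2.1
      refine gtAux_dvd k N d mN hmNodd' ?_
      obtain ⟨z, hz⟩ := hd 2 2 (by omega) (by omega) (by omega)
      exact ⟨z, by rw [← hT1N, ← hx22]; exact hz⟩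
    · have hx12 : x 1 2 = T1 N := (hodd hko).2.2.2.2.2.2.1
      refine gtAux_dvd k N d mN hmNodd' ?_
      obtain ⟨z, hz⟩ := hd 1 2 (by omega) (by omega) (by omega)
      exact ⟨z, by rw [← hT1N, ← hx12]; exact hz⟩
  refine ⟨⟨⟨by positivity, ?mem⟩, ?lb⟩, ?ess, ?pow⟩
  case lb =>
    intro d hd
    exact Nat.le_of_dvd hd.1 (hdenom d hd.2)
  case pow =>
    rw [show ((2:ℝ) ^ (N:ℕ)) = (2:ℝ) ^ ((N:ℕ):ℝ) from (Real.rpow_natCast 2 N).symm]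
    rw [gt_iff_lt, Real.rpow_lt_rpow_left_iff (by norm_num : (1:ℝ) < 2)]
    have h1 : 2 * (k / 2 : ℕ) + 1 ≥ k := by omega
    have h1' : ((k:ℝ) - 1) / 2 ≤ ((k / 2 : ℕ) : ℝ) := by
      have := (Nat.cast_le (α := ℝ)).mpr h1
      push_cast at this
      linarith
    have h2 : ((N:ℕ):ℝ) = (k:ℝ) + ((k/2 : ℕ):ℝ) - 2 := by
      have h : (N : ℕ) + 2 = k + k/2 := by omega
      have h' : ((N:ℕ):ℝ) + 2 = (k:ℝ) + ((k/2:ℕ):ℝ) := by exact_mod_cast h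
      linarith
    have h3 : (n:ℝ) = 3 * k := by exact_mod_cast congrArg (Nat.cast (R := ℝ)) hn
    rw [h2, h3]
    have hk3 : (2:ℝ) ≤ (k:ℝ) := by exact_mod_cast hk
    linarith
  case mem =>
    intro i j hi hij hjn
    have hT1int : ∀ m : ℕ, m ≤ N → ∃ z : ℤ, (2:ℚ)^N * T1 m = z := by
      intro m hm
      obtain ⟨mm, hmm, -⟩ := gtAux_T1form k m
      exact gtAux_int k N m mm hm _ ((hT1 m).trans hmm)
    have hT2int : ∀ m : ℕ, m + 1 ≤ N → ∃ z : ℤ, (2:ℚ)^N * T2 m = z := by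
      intro m hm
      obtain ⟨mm, hmm⟩ := gtAux_T2form k m
      exact gtAux_int k N (m+1) mm hm _ ((hT2 m).trans hmm)
    have hkint : ∃ z : ℤ, (2:ℚ)^N * (k:ℚ) = z := ⟨2^N * k, by push_cast; ring⟩
    have hk1int : ∃ z : ℤ, (2:ℚ)^N * ((k:ℚ)-1) = z := ⟨2^N * k - 2^N, by push_cast; ring⟩
    have hhalfint : ∃ z : ℤ, (2:ℚ)^N * ((k:ℚ)-1/2) = z := by
      obtain ⟨P, hP⟩ : ∃ P, N = P + 1 := ⟨N-1, by omega⟩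
      refine ⟨2^P * (2*k - 1), ?_⟩
      rw [hP]; push_cast [pow_succ]; ring
    have h1int : ∃ z : ℤ, (2:ℚ)^N * (1:ℚ) = z := ⟨2^N, by push_cast; ring⟩
    have h2subint : ∃ z : ℤ, (2:ℚ)^N * (2 - T1 N) = z := by
      obtain ⟨z, hz⟩ := hT1int N le_rfl
      exact ⟨2*2^N - z, by push_cast; linarith⟩
    have h3subint : ∃ z : ℤ, (2:ℚ)^N * (3 - 2*T1 N) = z := by
      obtain ⟨z, hz⟩ := hT1int N le_rfl
      exact ⟨3*2^N - 2*z, by push_cast; linarith⟩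
    have done : ∀ v : ℚ, x i j = v → (∃ z:ℤ, (2:ℚ)^N * v = z) →
        ∃ z : ℤ, ((2^N : ℕ):ℚ) * x i j = z := by
      rintro v hv ⟨z, hz⟩
      refine ⟨z, ?_⟩
      rw [hv]; push_cast; exact_mod_cast hz
    by_cases hi4 : 4 ≤ i
    · exact ⟨0, by rw [hzero i j hi4 hij hjn]; push_cast; ring⟩
    push_neg at hi4
    obtain ⟨m, hm⟩ : ∃ m, n - j = 2*m ∨ n - j = 2*m + 1 := ⟨(n-j)/2, by omega⟩
    interval_cases i
    · -- i = 1
      rcases hm with hm | hm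
      · rcases Nat.eq_zero_or_pos m with rfl | hm1
        · exact done _ (by rw [show j = n from by omega]; exact htop.1) hkint
        rcases Nat.lt_or_ge m 2 with hm2 | hm2
        · exact done _ (by rw [show j = n - 2 from by omega]; exact hrow2.1) hkint
        rcases Nat.lt_or_ge m (N+1) with hm3 | hm3
        · refine done (T2 (m-1)) ?_ (hT2int (m-1) (by omega))
          have hb := hblock (m-1) (by omega) (by omega)
          rw [show j = n - 2*(m-1) - 2 from by omega]
          exact hb.2.2.2.1
        rcases Nat.even_or_odd k with hke | hko
        · obtain ⟨c, hc⟩ := hke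
          exact done _ (by rw [show j = 2 from by omega]; exact (heven ⟨c, hc⟩).2.2.2.1) h2subint
        · obtain ⟨c, hc⟩ := hko
          rcases Nat.lt_or_ge m (N+2) with hm4 | hm4
          · exact done _ (by rw [show j = 3 from by omega]; exact (hodd ⟨c, hc⟩).2.2.2.1)
              (hT1int N le_rfl)
          · exact done _ (by rw [show j = 1 from by omega]; exact (hodd ⟨c, hc⟩).2.2.2.2.2.2.2.2)
              h1int
      · rcases Nat.eq_zero_or_pos m with rfl | hm1
        · exact done _ (by rw [show j = n - 1 from by omega]; exact hrow1.1) hkint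
        rcases Nat.lt_or_ge m 2 with hm2 | hm2
        · exact done _ (by rw [show j = n - 3 from by omega]; exact hrow3) hkint
        rcases Nat.lt_or_ge m (N+1) with hm3 | hm3
        · refine done (T1 (m-1)) ?_ (hT1int (m-1) (by omega))
          have hb := hblock (m-1) (by omega) (by omega)
          rw [show j = n - 2*(m-1) - 3 from by omega]
          exact hb.2.2.2.2.2
        rcases Nat.even_or_odd k with hke | hko
        · obtain ⟨c, hc⟩ := hke
          exact done _ (by rw [show j = 1 from by omega]; exact (heven ⟨c, hc⟩).2.2.2.2.2) h1int
        · obtain ⟨c, hc⟩ := hko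
          exact done _ (by rw [show j = 2 from by omega]; exact (hodd ⟨c, hc⟩).2.2.2.2.2.2.1)
            (hT1int N le_rfl)
    · -- i = 2
      rcases hm with hm | hm
      · rcases Nat.eq_zero_or_pos m with rfl | hm1
        · exact done _ (by rw [show j = n from by omega]; exact htop.2.1) hkint
        rcases Nat.lt_or_ge m 2 with hm2 | hm2
        · exact done _ (by rw [show j = n - 2 from by omega]; exact hrow2.2) hhalfint
        rcases Nat.lt_or_ge m (N+1) with hm3 | hm3
        · refine done (T1 (m-1)) ?_ (hT1int (m-1) (by omega))
          have hb := hblock (m-1) (by omega) (by omega)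
          rw [show j = n - 2*(m-1) - 2 from by omega]
          exact hb.2.2.2.2.1
        rcases Nat.even_or_odd k with hke | hko
        · obtain ⟨c, hc⟩ := hke
          exact done _ (by rw [show j = 2 from by omega]; exact (heven ⟨c, hc⟩).2.2.2.2.1)
            (hT1int N le_rfl)
        · obtain ⟨c, hc⟩ := hko
          exact done _ (by rw [show j = 3 from by omega]; exact (hodd ⟨c, hc⟩).2.2.2.2.1)
            (hT1int N le_rfl)
      · rcases Nat.eq_zero_or_pos m with rfl | hm1
        · exact done _ (by rw [show j = n - 1 from by omega]; exact hrow1.2.1) hkint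
        rcases Nat.lt_or_ge m N with hm3 | hm3
        · refine done (T1 m) ?_ (hT1int m (by omega))
          have hb := hblock m (by omega) (by omega)
          rw [show j = n - 2*m - 1 from by omega]
          exact hb.2.1
        rcases Nat.even_or_odd k with hke | hko
        · obtain ⟨c, hc⟩ := hke
          rcases Nat.lt_or_ge m (N+1) with hm4 | hm4
          · exact done _ (by rw [show j = 3 from by omega]; exact (heven ⟨c, hc⟩).2.1)
              (hT1int N le_rfl)
          · exfalso; omega
        · obtain ⟨c, hc⟩ := hko
          rcases Nat.lt_or_ge m (N+1) with hm4 | hm4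
          · exact done _ (by rw [show j = 4 from by omega]; exact (hodd ⟨c, hc⟩).2.1)
              (hT1int N le_rfl)
          · exact done _ (by rw [show j = 2 from by omega]; exact (hodd ⟨c, hc⟩).2.2.2.2.2.2.2.1)
              h2subint
    · -- i = 3
      rcases hm with hm | hm
      · rcases Nat.eq_zero_or_pos m with rfl | hm1
        · exact done _ (by rw [show j = n from by omega]; exact htop.2.2) hkint
        rcases Nat.lt_or_ge m N with hm3 | hm3
        · refine done (T1 m) ?_ (hT1int m (by omega))
          have hb := hblock m (by omega) (by omega)
          rw [show j = n - 2*m from by omega]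
          exact hb.1
        rcases Nat.even_or_odd k with hke | hko
        · obtain ⟨c, hc⟩ := hke
          rcases Nat.lt_or_ge m (N+1) with hm4 | hm4
          · exact done _ (by rw [show j = 4 from by omega]; exact (heven ⟨c, hc⟩).1)
              (hT1int N le_rfl)
          · exfalso; omega
        · obtain ⟨c, hc⟩ := hko
          rcases Nat.lt_or_ge m (N+1) with hm4 | hm4
          · exact done _ (by rw [show j = 5 from by omega]; exact (hodd ⟨c, hc⟩).1)
              (hT1int N le_rfl)
          · exact done _ (by rw [show j = 3 from by omega]; exact (hodd ⟨c, hc⟩).2.2.2.2.2.1)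
              h3subint
      · rcases Nat.eq_zero_or_pos m with rfl | hm1
        · exact done _ (by rw [show j = n - 1 from by omega]; exact hrow1.2.2) hk1int
        rcases Nat.lt_or_ge m N with hm3 | hm3
        · refine done (T1 m) ?_ (hT1int m (by omega))
          have hb := hblock m (by omega) (by omega)
          rw [show j = n - 2*m - 1 from by omega]
          exact hb.2.2.1
        rcases Nat.even_or_odd k with hke | hko
        · obtain ⟨c, hc⟩ := hke
          rcases Nat.lt_or_ge m (N+1) with hm4 | hm4
          · exact done _ (by rw [show j = 3 from by omega]; exact (heven ⟨c, hc⟩).2.2.1)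
              (hT1int N le_rfl)
          · exfalso; omega
        · obtain ⟨c, hc⟩ := hko
          rcases Nat.lt_or_ge m (N+1) with hm4 | hm4
          · exact done _ (by rw [show j = 4 from by omega]; exact (hodd ⟨c, hc⟩).2.2.1)
              (hT1int N le_rfl)
          · exfalso; omega
  case ess =>
    rintro ⟨M₁, M₂, y₁, y₂, hM₁, hM₂, hMsum, hgt1, hgt2, hint, hsum⟩
    have hnq : (n:ℚ) = 3*(k:ℚ) := by rw [hn]; push_cast; ring
    have vert : ∀ i r : ℕ, 1 ≤ i → i ≤ r → r + 1 ≤ n → x i r = x i (r+1) →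
        y₁ i r = y₁ i (r+1) := by
      intro i r h1 h2 h3 hx
      have a1 := (hgt1.1 i r h1 h2 (by omega)).1
      have a2 := (hgt2.1 i r h1 h2 (by omega)).1
      have s1 := hsum i r h1 h2 (by omega)
      have s2 := hsum i (r+1) h1 (by omega) (by omega)
      rw [hx] at s1
      linarith
    have diag : ∀ i r : ℕ, 1 ≤ i → i ≤ r → r + 1 ≤ n → x i r = x (i+1) (r+1) →
        y₁ i r = y₁ (i+1) (r+1) := by
      intro i r h1 h2 h3 hx
      have a1 := (hgt1.1 i r h1 h2 (by omega)).2
      have a2 := (hgt2.1 i r h1 h2 (by omega)).2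
      have s1 := hsum i r h1 h2 (by omega)
      have s2 := hsum (i+1) (r+1) (by omega) (by omega) (by omega)
      rw [hx] at s1
      linarith
    have hT1rec : ∀ j : ℕ, 2 * T1 (j+1) + T1 j = 3*(k:ℚ) - 2*(j:ℚ) - 3 := by
      intro j; rw [hT1, hT1]; push_cast [pow_succ]; ring
    -- top rows of y₁ forced to M₁·k
    have htn := hgt1.2.1
    have h1n : y₁ 1 n = M₁ * k := by rw [htn 1 (by omega) (by omega)]; norm_num
    have h2n : y₁ 2 n = M₁ * k := by rw [htn 2 (by omega) (by omega)]; norm_num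
    have h3n : y₁ 3 n = M₁ * k := by rw [htn 3 (by omega) (by omega)]; norm_num
    have e1 : n - 1 + 1 = n := by omega
    have b1 := hgt1.1 1 (n-1) (by omega) (by omega) (by omega)
    rw [e1] at b1; norm_num at b1
    have b2 := hgt1.1 2 (n-1) (by omega) (by omega) (by omega)
    rw [e1] at b2; norm_num at b2
    have h1n1 : y₁ 1 (n-1) = M₁ * k := by linarith [b1.1, b1.2]
    have h2n1 : y₁ 2 (n-1) = M₁ * k := by linarith [b2.1, b2.2]
    have e2 : n - 2 + 1 = n - 1 := by omega
    have b3 := hgt1.1 1 (n-2) (by omega) (by omega) (by omega)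
    rw [e2] at b3; norm_num at b3
    have h1n2 : y₁ 1 (n-2) = M₁ * k := by linarith [b3.1, b3.2]
    have en : n - 3 + 1 = n - 2 := by omega
    have h1n3 : y₁ 1 (n-3) = M₁ * k := by
      have h := vert 1 (n-3) (by omega) (by omega) (by omega)
        (by rw [en, hrow3, hrow2.1])
      rw [en] at h
      rw [h, h1n2]
    -- the main induction down the pattern
    have A : ∀ j : ℕ, 1 ≤ j → j ≤ N →
        y₁ 2 (n - 2*j - 1) = M₁ * T1 j ∧ y₁ 3 (n - 2*j - 1) = M₁ * T1 j := by
      intro j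
      induction j with
      | zero => intro h _; exact absurd h (by omega)
      | succ j ih =>
        intro _ hjN
        rcases Nat.eq_zero_or_pos j with rfl | hj1
        · -- base case: j+1 = 1
          simp only [show (0:ℕ)+1 = 1 from rfl]
          have hxe : x 2 (n-3) = x 3 (n-2) ∧ x 3 (n-3) = x 3 (n-2) := by
            rcases Nat.lt_or_ge N 2 with hN2 | hN2
            · have hke : Even k := by
                have hk2 : k = 2 := by omega
                exact hk2 ▸ (by decide)
              have hh := heven hke
              have hn6' : n = 6 := by omega
              rw [hn6']
              norm_num
              exact ⟨hh.2.1.trans hh.1.symm, hh.2.2.1.trans hh.1.symm⟩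
            · have hb := hblock 1 (by omega) (by omega)
              have e3 : n - 2*1 - 1 = n - 3 := by omega
              have e4 : n - 2*1 = n - 2 := by omega
              rw [e3, e4] at hb
              exact ⟨hb.2.1.trans hb.1.symm, hb.2.2.1.trans hb.1.symm⟩
          have hd1 : y₁ 2 (n-3) = y₁ 3 (n-2) := by
            have h := diag 2 (n-3) (by omega) (by omega) (by omega)
              (by norm_num [en]; exact hxe.1)
            norm_num [en] at h; exact h
          have hv1 : y₁ 3 (n-3) = y₁ 3 (n-2) := by
            have h := vert 3 (n-3) (by omega) (by omega) (by omega)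
              (by rw [en]; exact hxe.2)
            rw [en] at h; exact h
          have hs := gtAux_rowsum hgt1 (show 3 ≤ n-3 by omega) (by omega)
          have hrq : ((n - 3 : ℕ):ℚ) = 3*(k:ℚ) - 3 := by
            have hr : (n - 3) + 3 = n := by omega
            have hr' := congrArg (fun t : ℕ => (t:ℚ)) hr
            push_cast at hr'
            linarith
          rw [hrq] at hs
          have hT11 : T1 1 = (k:ℚ) - 3/2 := by rw [hT1]; norm_num; linarith
          have e5 : n - 2*1 - 1 = n - 3 := by omega
          rw [e5, hT11]
          constructor
          · linarith [hs, h1n3, hd1, hv1]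
          · linarith [hs, h1n3, hd1, hv1]
        · -- inductive step: j ≥ 1
          have hP := ih (by omega) (by omega)
          have hb := hblock j (by omega) (by omega)
          have hxe : x 2 (n - 2*j - 3) = x 3 (n - 2*j - 2) ∧
              x 3 (n - 2*j - 3) = x 3 (n - 2*j - 2) := by
            rcases Nat.lt_or_ge (j+1) N with hlt | hge
            · have hb2 := hblock (j+1) (by omega) (by omega)
              have e7 : n - 2*(j+1) - 1 = n - 2*j - 3 := by omega
              have e6 : n - 2*(j+1) = n - 2*j - 2 := by omega
              rw [e7, e6] at hb2
              exact ⟨hb2.2.1.trans hb2.1.symm, hb2.2.2.1.trans hb2.1.symm⟩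
            · rcases Nat.even_or_odd k with hke | hko
              · have hh := heven hke
                obtain ⟨c, hc⟩ := hke
                have e6 : n - 2*j - 2 = 4 := by omega
                have e7 : n - 2*j - 3 = 3 := by omega
                rw [e6, e7]
                exact ⟨hh.2.1.trans hh.1.symm, hh.2.2.1.trans hh.1.symm⟩
              · have hh := hodd hko
                obtain ⟨c, hc⟩ := hko
                have e6 : n - 2*j - 2 = 5 := by omega
                have e7 : n - 2*j - 3 = 4 := by omega
                rw [e6, e7]
                exact ⟨hh.2.1.trans hh.1.symm, hh.2.2.1.trans hh.1.symm⟩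
          have ev1 : n - 2*j - 2 + 1 = n - 2*j - 1 := by omega
          have ev2 : n - 2*j - 3 + 1 = n - 2*j - 2 := by omega
          have hv2 : y₁ 2 (n - 2*j - 2) = M₁ * T1 j := by
            have h := vert 2 (n - 2*j - 2) (by omega) (by omega) (by omega)
              (by rw [ev1]; exact hb.2.2.2.2.1.trans hb.2.1.symm)
            rw [ev1] at h
            rw [h, hP.1]
          have hd2 : y₁ 1 (n - 2*j - 3) = M₁ * T1 j := by
            have h := diag 1 (n - 2*j - 3) (by omega) (by omega) (by omega)
              (by norm_num [ev2]; exact hb.2.2.2.2.2.trans hb.2.2.2.2.1.symm)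
            norm_num [ev2] at h
            rw [h, hv2]
          have hd3 : y₁ 2 (n - 2*j - 3) = y₁ 3 (n - 2*j - 2) := by
            have h := diag 2 (n - 2*j - 3) (by omega) (by omega) (by omega)
              (by norm_num [ev2]; exact hxe.1)
            norm_num [ev2] at h; exact h
          have hv3 : y₁ 3 (n - 2*j - 3) = y₁ 3 (n - 2*j - 2) := by
            have h := vert 3 (n - 2*j - 3) (by omega) (by omega) (by omega)
              (by rw [ev2]; exact hxe.2)
            rw [ev2] at h; exact h
          have hs := gtAux_rowsum hgt1 (show 3 ≤ n - 2*j - 3 by omega) (by omega)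
          have hrq : ((n - 2*j - 3 : ℕ):ℚ) = 3*(k:ℚ) - 2*(j:ℚ) - 3 := by
            have hr : (n - 2*j - 3) + (2*j + 3) = n := by omega
            have hr' := congrArg (fun t : ℕ => (t:ℚ)) hr
            push_cast at hr'
            linarith
          rw [hrq] at hs
          have hrecj : (M₁:ℚ) * (2 * T1 (j+1)) + (M₁:ℚ) * T1 j
              = (M₁:ℚ) * (3*(k:ℚ) - 2*(j:ℚ) - 3) := by
            linear_combination (M₁:ℚ) * hT1rec j
          have e8 : n - 2*(j+1) - 1 = n - 2*j - 3 := by omega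
          rw [e8]
          constructor
          · linarith [hs, hd2, hd3, hv3, hrecj]
          · linarith [hs, hd2, hd3, hv3, hrecj]
    obtain ⟨hA2, -⟩ := A N (by omega) le_rfl
    have hfin : ∃ zz : ℤ, (M₁:ℚ) * T1 N = zz := by
      rcases Nat.even_or_odd k with hke | hko
      · have hh := heven hke
        obtain ⟨c, hc⟩ := hke
        have e9 : n - 2*N - 1 = 3 := by omega
        rw [e9] at hA2
        have h := vert 2 2 (by omega) (by omega) (by omega)
          (by norm_num; exact hh.2.2.2.2.1.trans hh.2.1.symm)
        norm_num at h
        obtain ⟨⟨z, hz⟩, -⟩ := hint 2 2 (by omega) (by omega) (by omega)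
        exact ⟨z, by rw [← hA2, ← h]; exact hz⟩
      · have hh := hodd hko
        obtain ⟨c, hc⟩ := hko
        have e9 : n - 2*N - 1 = 4 := by omega
        rw [e9] at hA2
        have hd := diag 1 3 (by omega) (by omega) (by omega)
          (by norm_num; exact hh.2.2.2.1.trans hh.2.1.symm)
        norm_num at hd
        have hv := vert 1 2 (by omega) (by omega) (by omega)
          (by norm_num; exact hh.2.2.2.2.2.2.1.trans hh.2.2.2.1.symm)
        norm_num at hv
        obtain ⟨⟨z, hz⟩, -⟩ := hint 1 2 (by omega) (by omega) (by omega)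
        exact ⟨z, by rw [← hA2, ← hd, ← hv]; exact hz⟩
    have hdvd : (2:ℕ)^N ∣ M₁ := by
      refine gtAux_dvd k N M₁ mN hmNodd' ?_
      obtain ⟨z, hz⟩ := hfin
      exact ⟨z, by rw [← hT1N]; exact hz⟩
    have := Nat.le_of_dvd hM₁ hdvd
    omega
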